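/- Let a_0 < a_1 < ⋯ < a_n be real numbers, let c_{a_0}, …, c_{a_n} > 0, l > 0, and weights ω_{a_0}, …, ω_{a_n} > 0, and let 𝒯_{a_i} be the rational GT-Bernstein basis functions. Then for every strictly increasing sequence a_0 ≤ t_0 < t_1 < ⋯ < t_n ≤ a_n (where the endpoints t_0 = a_0 and t_n = a_n are allowed), the determinant of the collocation matrix C = [𝒯_{a_j}(t_i)]_{i,j=0}^{n} is strictly positive; in particular, C is nonsingular. -/

import Mathlib

/-- The GT-Bernstein basis functions
`β_{a_i}(t) = c_{a_i} (l(t − a_0))^{l(a_i − a_0)} (l(a_n − t))^{l(a_n − a_i)}`,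
where powers are real powers (`Real.rpow`, which satisfies `0 ^ 0 = 1`). -/
noncomputable def gtBernstein (n : ℕ) (a c : Fin (n + 1) → ℝ) (l : ℝ)
    (i : Fin (n + 1)) (t : ℝ) : ℝ :=
  c i * (l * (t - a 0)) ^ (l * (a i - a 0)) *
    (l * (a (Fin.last n) - t)) ^ (l * (a (Fin.last n) - a i))

/-- The rational GT-Bernstein basis functions
`𝒯_{a_i}(t) = ω_{a_i} β_{a_i}(t) / Σ_j ω_{a_j} β_{a_j}(t)`. -/
noncomputable def ratGTBernstein (n : ℕ) (a c : Fin (n + 1) → ℝ) (l : ℝ)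
    (ω : Fin (n + 1) → ℝ) (i : Fin (n + 1)) (t : ℝ) : ℝ :=
  ω i * gtBernstein n a c l i t / ∑ j, ω j * gtBernstein n a c l j t


open Set Matrix
lemma expsum_eq_zero : ∀ (m : ℕ) (cc x e : Fin (m + 1) → ℝ),
    StrictMono x → (∀ i, 0 < x i) → StrictMono e →
    (∀ i, ∑ j, cc j * x i ^ e j = 0) → ∀ j, cc j = 0 := by
  intro m
  induction m with
  | zero =>
    intro cc x e _ hxpos _ hsum j
    have h0 := hsum 0
    rw [Fin.sum_univ_one] at h0
    have hp : (0:ℝ) < x 0 ^ e 0 := Real.rpow_pos_of_pos (hxpos 0) _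
    have : cc 0 = 0 := by
      rcases mul_eq_zero.mp h0 with h | h
      · exact h
      · exact absurd h hp.ne'
    exact Fin.fin_one_eq_zero j ▸ this
  | succ m ih =>
    intro cc x e hx hxpos he hsum
    set g : ℝ → ℝ := fun y => ∑ j, cc j * y ^ (e j - e 0) with hg
    have hgderiv : ∀ y : ℝ, 0 < y →
        HasDerivAt g (∑ j, cc j * ((e j - e 0) * y ^ (e j - e 0 - 1))) y := by
      intro y hy
      exact HasDerivAt.fun_sum fun j _ =>
        (Real.hasDerivAt_rpow_const (Or.inl hy.ne')).const_mul (cc j)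
    have hgzero : ∀ i, g (x i) = 0 := by
      intro i
      simp only [hg]
      have : ∀ j : Fin (m + 2), cc j * x i ^ (e j - e 0) = cc j * x i ^ e j / x i ^ e 0 := by
        intro j
        rw [Real.rpow_sub (hxpos i), mul_div_assoc]
      rw [Finset.sum_congr rfl fun j _ => this j, ← Finset.sum_div, hsum i, zero_div]
    have key : ∀ i : Fin (m + 1), ∃ y ∈ Ioo (x i.castSucc) (x i.succ),
        ∑ j, cc j * ((e j - e 0) * y ^ (e j - e 0 - 1)) = 0 := by
      intro i
      have hab : x i.castSucc < x i.succ := hx Fin.castSucc_lt_succ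
      refine exists_hasDerivAt_eq_zero (f := g)
        (f' := fun y => ∑ j, cc j * ((e j - e 0) * y ^ (e j - e 0 - 1))) hab ?_ ?_ ?_
      · intro y hy
        exact ((hgderiv y ((hxpos i.castSucc).trans_le hy.1)).continuousAt).continuousWithinAt
      · rw [hgzero, hgzero]
      · intro y hy
        exact hgderiv y ((hxpos i.castSucc).trans hy.1)
    choose y hy1 hy2 using key
    have hypos : ∀ i, 0 < y i := fun i => (hxpos i.castSucc).trans (hy1 i).1
    have hymono : StrictMono y := by
      intro i i' hii'
      calc y i < x i.succ := (hy1 i).2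
        _ ≤ x i'.castSucc := hx.monotone (by
            have h' : (i : ℕ) < (i' : ℕ) := hii'
            simp only [Fin.le_def, Fin.val_succ, Fin.coe_castSucc]; omega)
        _ < y i' := (hy1 i').1
    have hnewsum : ∀ i, ∑ j : Fin (m + 1),
        (cc j.succ * (e j.succ - e 0)) * y i ^ (e j.succ - e 0 - 1) = 0 := by
      intro i
      have h := hy2 i
      rw [Fin.sum_univ_succ] at h
      simp only [sub_self, Real.rpow_zero, zero_mul, mul_zero, zero_add] at h
      rw [← h]
      exact Finset.sum_congr rfl fun j _ => by ring
    have hsucc : ∀ j : Fin (m + 1), cc j.succ * (e j.succ - e 0) = 0 :=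
      ih (fun j => cc j.succ * (e j.succ - e 0)) y (fun j => e j.succ - e 0 - 1)
        hymono hypos
        (fun j j' h => by
          dsimp only
          have := he (show j.succ < j'.succ from Fin.succ_lt_succ_iff.mpr h)
          linarith)
        hnewsum
    have hccsucc : ∀ j : Fin (m + 1), cc j.succ = 0 := by
      intro j
      have hpos : (0:ℝ) < e j.succ - e 0 := sub_pos.mpr (he (Fin.succ_pos j))
      rcases mul_eq_zero.mp (hsucc j) with h | h
      · exact h
      · exact absurd h hpos.ne'
    have hcc0 : cc 0 = 0 := by
      have h := hsum 0
      rw [Fin.sum_univ_succ] at h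
      simp only [hccsucc, zero_mul, Finset.sum_const_zero, add_zero] at h
      have hp : (0:ℝ) < x 0 ^ e 0 := Real.rpow_pos_of_pos (hxpos 0) _
      rcases mul_eq_zero.mp h with h' | h'
      · exact h'
      · exact absurd h' hp.ne'
    intro j
    refine Fin.cases hcc0 hccsucc j

lemma rpow_vdm_det_ne_zero (m : ℕ) (x e : Fin (m + 1) → ℝ)
    (hx : StrictMono x) (hxpos : ∀ i, 0 < x i) (he : StrictMono e) :
    (Matrix.of fun i j : Fin (m + 1) => x i ^ e j).det ≠ 0 := by
  intro h
  obtain ⟨v, hv, hmv⟩ := (Matrix.exists_mulVec_eq_zero_iff).mpr h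
  apply hv
  funext j
  refine expsum_eq_zero m v x e hx hxpos he (fun i => ?_) j
  have := congrFun hmv i
  simpa [Matrix.mulVec, dotProduct, mul_comm] using this

lemma rpow_vdm_det_pos (m : ℕ) (x e : Fin (m + 1) → ℝ)
    (hx : StrictMono x) (hxpos : ∀ i, 0 < x i) (he : StrictMono e) :
    0 < (Matrix.of fun i j : Fin (m + 1) => x i ^ e j).det := by
  by_contra hle
  push_neg at hle
  set F : ℝ → ℝ := fun s =>
    (Matrix.of fun i j : Fin (m + 1) => x i ^ ((1 - s) * e j + s * (j : ℕ))).det with hF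
  have hFcont : Continuous F := by
    apply Continuous.matrix_det
    apply continuous_matrix
    intro i j
    have : (fun s : ℝ => (Matrix.of fun i j : Fin (m + 1) =>
        x i ^ ((1 - s) * e j + s * (j : ℕ))) i j)
        = fun s : ℝ => Real.exp (Real.log (x i) * ((1 - s) * e j + s * (j : ℕ))) := by
      funext s
      exact Real.rpow_def_of_pos (hxpos i) _
    rw [this]
    fun_prop
  have hemono : ∀ s ∈ Icc (0:ℝ) 1, StrictMono fun j : Fin (m + 1) => (1 - s) * e j + s * (j : ℕ) := by
    intro s hs j j' hjj'
    dsimp only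
    have h1 : e j < e j' := he hjj'
    have h2 : ((j : ℕ) : ℝ) < ((j' : ℕ) : ℝ) := by exact_mod_cast hjj'
    have hpos : 0 < (1 - s) * (e j' - e j) + s * (((j' : ℕ) : ℝ) - (j : ℕ)) := by
      rcases lt_or_eq_of_le hs.1 with h0 | h0
      · exact add_pos_of_nonneg_of_pos
          (mul_nonneg (by linarith [hs.2]) (by linarith)) (mul_pos h0 (by linarith))
      · rw [← h0]; simp; nlinarith
    linarith
  have hne : ∀ s ∈ Icc (0:ℝ) 1, F s ≠ 0 := fun s hs =>
    rpow_vdm_det_ne_zero m x _ hx hxpos (hemono s hs)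
  have hF1 : 0 < F 1 := by
    have : F 1 = (Matrix.vandermonde x).det := by
      simp only [hF]
      congr 1
      ext i j
      rw [Matrix.of_apply, Matrix.vandermonde]
      rw [show (1 - (1:ℝ)) * e j + 1 * (j : ℕ) = ((j : ℕ) : ℝ) by ring, Real.rpow_natCast]
      rfl
    rw [this, Matrix.det_vandermonde]
    refine Finset.prod_pos fun i _ => Finset.prod_pos fun j hj => ?_
    exact sub_pos.mpr (hx (Finset.mem_Ioi.mp hj))
  have hF0 : F 0 ≤ 0 := by
    have : F 0 = (Matrix.of fun i j : Fin (m + 1) => x i ^ e j).det := by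
      simp only [hF]
      congr 1
      ext i j
      norm_num
    rw [this]; exact hle
  obtain ⟨s, hs, hFs⟩ := intermediate_value_Icc (by norm_num : (0:ℝ) ≤ 1)
    hFcont.continuousOn (show (0:ℝ) ∈ Icc (F 0) (F 1) from ⟨hF0, hF1.le⟩)
  exact hne s hs hFs

lemma gtB_interior (a0 an l : ℝ) (hl : 0 < l) (m : ℕ) (s b γ : Fin (m + 1) → ℝ)
    (hs : StrictMono s) (hb : StrictMono b) (hγ : ∀ j, 0 < γ j)
    (h0 : ∀ i, a0 < s i) (hn : ∀ i, s i < an) :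
    0 < (Matrix.of fun i j : Fin (m + 1) =>
      γ j * (l * (s i - a0)) ^ (l * (b j - a0)) * (l * (an - s i)) ^ (l * (an - b j))).det := by
  set A : Fin (m+1) → ℝ := fun i => l * (s i - a0) with hA
  set D : Fin (m+1) → ℝ := fun i => l * (an - s i) with hD
  set E : Fin (m+1) → ℝ := fun j => l * (b j - a0) with hE
  set L : ℝ := l * (an - a0) with hL
  have hApos : ∀ i, 0 < A i := fun i => mul_pos hl (sub_pos.mpr (h0 i))
  have hDpos : ∀ i, 0 < D i := fun i => mul_pos hl (sub_pos.mpr (hn i))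
  set u : Fin (m+1) → ℝ := fun i => A i / D i with hu
  have hupos : ∀ i, 0 < u i := fun i => div_pos (hApos i) (hDpos i)
  have humono : StrictMono u := by
    intro i i' h
    rw [hu]; dsimp only
    rw [div_lt_div_iff₀ (hDpos i) (hDpos i')]
    have hsi := hs h
    have hAlt : A i < A i' := by rw [hA]; dsimp only; nlinarith
    have hDlt : D i' < D i := by rw [hD]; dsimp only; nlinarith
    exact mul_lt_mul'' hAlt hDlt (hApos i).le (hDpos i').le
  have hEmono : StrictMono E := by
    intro j j' h
    rw [hE]; dsimp only
    have := hb h; nlinarith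
  have heq : (Matrix.of fun i j : Fin (m + 1) =>
      γ j * (l * (s i - a0)) ^ (l * (b j - a0)) * (l * (an - s i)) ^ (l * (an - b j)))
      = Matrix.of fun i j : Fin (m+1) => D i ^ L *
          ((Matrix.of fun i j : Fin (m+1) => γ j *
            ((Matrix.of fun p q : Fin (m+1) => u p ^ E q) i j)) i j) := by
    ext i j
    simp only [Matrix.of_apply]
    rw [show l * (an - b j) = L + -(E j) by rw [hL, hE]; ring,
      Real.rpow_add (hDpos i), Real.rpow_neg (hDpos i).le, hu]
    dsimp only
    rw [Real.div_rpow (hApos i).le (hDpos i).le, div_eq_mul_inv]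
    rw [hA, hE, hD]
    ring
  rw [heq, Matrix.det_mul_column, Matrix.det_mul_row]
  have hcore := rpow_vdm_det_pos m u E humono hupos hEmono
  have h1 : 0 < ∏ i, D i ^ L := Finset.prod_pos fun i _ => Real.rpow_pos_of_pos (hDpos i) _
  have h2 : 0 < ∏ j, γ j := Finset.prod_pos fun j _ => hγ j
  positivity

lemma gtB_det_pos (a0 an l : ℝ) (hl : 0 < l) :
    ∀ (m : ℕ) (s b γ : Fin (m + 1) → ℝ),
    StrictMono s → StrictMono b → (∀ j, 0 < γ j) →
    a0 ≤ s 0 → s (Fin.last m) ≤ an →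
    (s 0 = a0 → b 0 = a0) → (s (Fin.last m) = an → b (Fin.last m) = an) →
    0 < (Matrix.of fun i j : Fin (m + 1) =>
      γ j * (l * (s i - a0)) ^ (l * (b j - a0)) *
        (l * (an - s i)) ^ (l * (an - b j))).det := by
  intro m
  induction m with
  | zero =>
    intro s b γ hs hb hγ hs0 hsl h0imp hnimp
    rw [Matrix.det_fin_one]
    simp only [Matrix.of_apply]
    by_cases hc : s 0 = a0
    · have hb0 := h0imp hc
      rw [hc, hb0, sub_self, mul_zero, Real.rpow_zero, mul_one]
      rcases eq_or_lt_of_le (show a0 ≤ an from hc ▸ hsl) with h | h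
      · rw [← h, sub_self, mul_zero, Real.rpow_zero, mul_one]; exact hγ 0
      · exact mul_pos (hγ 0) (Real.rpow_pos_of_pos (mul_pos hl (sub_pos.mpr h)) _)
    · by_cases hcn : s (Fin.last 0) = an
      · have hbn := hnimp hcn
        have hs0an : s 0 = an := hcn
        have hb0an : b 0 = an := hbn
        have han : a0 < an := lt_of_le_of_ne (hs0an ▸ hs0) fun h => hc (by rw [hs0an, ← h])
        rw [hs0an, hb0an, sub_self, mul_zero, Real.rpow_zero, mul_one]
        exact mul_pos (hγ 0) (Real.rpow_pos_of_pos (mul_pos hl (sub_pos.mpr han)) _)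
      · have h1 : a0 < s 0 := lt_of_le_of_ne hs0 (Ne.symm hc)
        have h2 : s 0 < an := lt_of_le_of_ne hsl hcn
        exact mul_pos (mul_pos (hγ 0)
          (Real.rpow_pos_of_pos (mul_pos hl (sub_pos.mpr h1)) _))
          (Real.rpow_pos_of_pos (mul_pos hl (sub_pos.mpr h2)) _)
  | succ k ih =>
    intro s b γ hs hb hγ hs0 hsl h0imp hnimp
    have hlastpos : (0 : Fin (k + 2)) < Fin.last (k + 1) := by
      rw [Fin.lt_def]; simp
    by_cases hc : s 0 = a0
    · have hb0 := h0imp hc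
      rw [Matrix.det_succ_row_zero, Finset.sum_eq_single 0]
      · simp only [Matrix.of_apply, Fin.val_zero, pow_zero, one_mul, Fin.succAbove_zero]
        have han : a0 < an := by
          calc a0 = s 0 := hc.symm
            _ < s (Fin.last (k + 1)) := hs hlastpos
            _ ≤ an := hsl
        have hentry : 0 < γ 0 * (l * (s 0 - a0)) ^ (l * (b 0 - a0)) *
            (l * (an - s 0)) ^ (l * (an - b 0)) := by
          rw [hc, hb0, sub_self, mul_zero, Real.rpow_zero, mul_one]
          exact mul_pos (hγ 0) (Real.rpow_pos_of_pos (mul_pos hl (sub_pos.mpr han)) _)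
        refine mul_pos hentry ?_
        have hminor : ((Matrix.of fun i j : Fin (k + 2) =>
            γ j * (l * (s i - a0)) ^ (l * (b j - a0)) *
              (l * (an - s i)) ^ (l * (an - b j))).submatrix Fin.succ Fin.succ)
            = Matrix.of fun i j : Fin (k + 1) =>
              (γ ∘ Fin.succ) j * (l * ((s ∘ Fin.succ) i - a0)) ^ (l * ((b ∘ Fin.succ) j - a0)) *
                (l * (an - (s ∘ Fin.succ) i)) ^ (l * (an - (b ∘ Fin.succ) j)) := by
          ext i j
          simp [Matrix.submatrix_apply, Function.comp]
        rw [hminor]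
        have hs1 : a0 < s (Fin.succ 0) := by rw [← hc]; exact hs (Fin.succ_pos 0)
        refine ih (s ∘ Fin.succ) (b ∘ Fin.succ) (γ ∘ Fin.succ)
          (hs.comp Fin.strictMono_succ) (hb.comp Fin.strictMono_succ) (fun j => hγ _)
          hs1.le ?_ (fun h => absurd h (ne_of_gt hs1)) ?_
        · show s (Fin.succ (Fin.last k)) ≤ an
          rw [Fin.succ_last]; exact hsl
        · show s (Fin.succ (Fin.last k)) = an → b (Fin.succ (Fin.last k)) = an
          rw [Fin.succ_last]; exact hnimp
      · intro j _ hj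
        have hbj : a0 < b j := by rw [← hb0]; exact hb (Fin.pos_of_ne_zero hj)
        have hz : (l * (s 0 - a0)) ^ (l * (b j - a0)) = 0 := by
          rw [hc, sub_self, mul_zero]
          exact Real.zero_rpow (ne_of_gt (mul_pos hl (sub_pos.mpr hbj)))
        simp [hz]
      · intro h; exact absurd (Finset.mem_univ 0) h
    · by_cases hcn : s (Fin.last (k + 1)) = an
      · have hbn := hnimp hcn
        rw [Matrix.det_succ_row _ (Fin.last (k + 1)), Finset.sum_eq_single (Fin.last (k + 1))]
        · simp only [Matrix.of_apply, Fin.val_last, Fin.succAbove_last]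
          rw [show ((-1 : ℝ)) ^ (k + 1 + (k + 1)) = 1 from Even.neg_one_pow ⟨k + 1, rfl⟩, one_mul]
          have han : a0 < an := by
            calc a0 ≤ s 0 := hs0
              _ < s (Fin.last (k + 1)) := hs hlastpos
              _ = an := hcn
          have hentry : 0 < γ (Fin.last (k + 1)) *
              (l * (s (Fin.last (k + 1)) - a0)) ^ (l * (b (Fin.last (k + 1)) - a0)) *
              (l * (an - s (Fin.last (k + 1)))) ^ (l * (an - b (Fin.last (k + 1)))) := by
            rw [hcn, hbn, sub_self, mul_zero, Real.rpow_zero, mul_one]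
            exact mul_pos (hγ _) (Real.rpow_pos_of_pos (mul_pos hl (sub_pos.mpr han)) _)
          refine mul_pos hentry ?_
          have hminor : ((Matrix.of fun i j : Fin (k + 2) =>
              γ j * (l * (s i - a0)) ^ (l * (b j - a0)) *
                (l * (an - s i)) ^ (l * (an - b j))).submatrix Fin.castSucc Fin.castSucc)
              = Matrix.of fun i j : Fin (k + 1) =>
                (γ ∘ Fin.castSucc) j *
                  (l * ((s ∘ Fin.castSucc) i - a0)) ^ (l * ((b ∘ Fin.castSucc) j - a0)) *
                  (l * (an - (s ∘ Fin.castSucc) i)) ^ (l * (an - (b ∘ Fin.castSucc) j)) := by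
            ext i j
            simp [Matrix.submatrix_apply, Function.comp]
          rw [hminor]
          have hslt : s (Fin.castSucc (Fin.last k)) < an := by
            rw [← hcn]; exact hs (Fin.castSucc_lt_last _)
          refine ih (s ∘ Fin.castSucc) (b ∘ Fin.castSucc) (γ ∘ Fin.castSucc)
            (hs.comp Fin.strictMono_castSucc) (hb.comp Fin.strictMono_castSucc) (fun j => hγ _)
            ?_ hslt.le ?_ (fun h => absurd h (ne_of_lt hslt))
          · show a0 ≤ s (Fin.castSucc 0)
            rw [show Fin.castSucc (0 : Fin (k + 1)) = 0 from rfl]; exact hs0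
          · show s (Fin.castSucc 0) = a0 → b (Fin.castSucc 0) = a0
            rw [show Fin.castSucc (0 : Fin (k + 1)) = 0 from rfl]; exact h0imp
        · intro j _ hj
          have hbj : b j < an := by
            rw [← hbn]; exact hb (lt_of_le_of_ne (Fin.le_last j) hj)
          have hz : (l * (an - s (Fin.last (k + 1)))) ^ (l * (an - b j)) = 0 := by
            rw [hcn, sub_self, mul_zero]
            exact Real.zero_rpow (ne_of_gt (mul_pos hl (sub_pos.mpr hbj)))
          simp [hz]
        · intro h; exact absurd (Finset.mem_univ _) h
      · refine gtB_interior a0 an l hl (k + 1) s b γ hs hb hγ ?_ ?_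
        · intro i
          exact lt_of_lt_of_le (lt_of_le_of_ne hs0 (Ne.symm hc)) (hs.monotone (Fin.zero_le i))
        · intro i
          exact lt_of_le_of_lt (hs.monotone (Fin.le_last i)) (lt_of_le_of_ne hsl hcn)

/-- For strictly increasing nodes `a 0 < a 1 < ⋯ < a n`, coefficients
`c i > 0`, `l > 0`, weights `ω i > 0`, and any strictly increasing sequence
`a 0 ≤ t 0 < t 1 < ⋯ < t n ≤ a n` (endpoints allowed), the determinant of the
collocation matrix `C = [𝒯_{a_j}(t_i)]` is strictly positive. -/
theorem ratGTBernstein_collocation_det_pos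
    (n : ℕ) (a c : Fin (n + 1) → ℝ) (l : ℝ) (ω : Fin (n + 1) → ℝ)
    (ha : StrictMono a) (hc : ∀ i, 0 < c i) (hl : 0 < l) (hω : ∀ i, 0 < ω i)
    (t : Fin (n + 1) → ℝ) (ht : StrictMono t)
    (ht0 : a 0 ≤ t 0) (htn : t (Fin.last n) ≤ a (Fin.last n)) :
    0 < (Matrix.of fun i j : Fin (n + 1) => ratGTBernstein n a c l ω j (t i)).det := by

  have htlow : ∀ i, a 0 ≤ t i := fun i => ht0.trans (ht.monotone (Fin.zero_le i))
  have hthigh : ∀ i, t i ≤ a (Fin.last n) := fun i => (ht.monotone (Fin.le_last i)).trans htn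
  have hβnonneg : ∀ (j : Fin (n + 1)) i, 0 ≤ gtBernstein n a c l j (t i) := by
    intro j i
    unfold gtBernstein
    have h1 : 0 ≤ l * (t i - a 0) := mul_nonneg hl.le (sub_nonneg.mpr (htlow i))
    have h2 : 0 ≤ l * (a (Fin.last n) - t i) := mul_nonneg hl.le (sub_nonneg.mpr (hthigh i))
    exact mul_nonneg (mul_nonneg (hc j).le (Real.rpow_nonneg h1 _)) (Real.rpow_nonneg h2 _)
  have hSpos : ∀ i, 0 < ∑ j, ω j * gtBernstein n a c l j (t i) := by
    intro i
    apply Finset.sum_pos'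
    · intro j _; exact mul_nonneg (hω j).le (hβnonneg j i)
    · by_cases hi : t i < a (Fin.last n)
      · refine ⟨0, Finset.mem_univ _, mul_pos (hω 0) ?_⟩
        unfold gtBernstein
        rw [sub_self, mul_zero, Real.rpow_zero, mul_one]
        exact mul_pos (hc 0) (Real.rpow_pos_of_pos (mul_pos hl (sub_pos.mpr hi)) _)
      · refine ⟨Fin.last n, Finset.mem_univ _, mul_pos (hω _) ?_⟩
        have hti : t i = a (Fin.last n) := le_antisymm (hthigh i) (not_lt.mp hi)
        unfold gtBernstein
        rw [hti, sub_self, mul_zero, Real.rpow_zero, mul_one]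
        rcases eq_or_lt_of_le (show a 0 ≤ a (Fin.last n) from ha.monotone (Fin.zero_le _))
          with h | h
        · rw [← h, sub_self, mul_zero, Real.rpow_zero, mul_one]; exact hc _
        · exact mul_pos (hc _) (Real.rpow_pos_of_pos (mul_pos hl (sub_pos.mpr h)) _)
  have hC : (Matrix.of fun i j : Fin (n + 1) => ratGTBernstein n a c l ω j (t i))
      = Matrix.of fun i j : Fin (n + 1) =>
          (∑ j', ω j' * gtBernstein n a c l j' (t i))⁻¹ *
            ((Matrix.of fun i j : Fin (n + 1) => ω j *
              ((Matrix.of fun i j : Fin (n + 1) => gtBernstein n a c l j (t i)) i j)) i j) := by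
    ext i j
    simp only [Matrix.of_apply, ratGTBernstein]
    rw [div_eq_mul_inv]; ring
  rw [hC, Matrix.det_mul_column, Matrix.det_mul_row]
  have hB : (Matrix.of fun i j : Fin (n + 1) => gtBernstein n a c l j (t i))
      = Matrix.of fun i j : Fin (n + 1) =>
          c j * (l * (t i - a 0)) ^ (l * (a j - a 0)) *
            (l * (a (Fin.last n) - t i)) ^ (l * (a (Fin.last n) - a j)) := rfl
  rw [hB]
  have hdet := gtB_det_pos (a 0) (a (Fin.last n)) l hl n t a c ht ha hc ht0 htn
    (fun _ => rfl) (fun _ => rfl)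
  have hinv : 0 < ∏ i, (∑ j', ω j' * gtBernstein n a c l j' (t i))⁻¹ :=
    Finset.prod_pos fun i _ => inv_pos.mpr (hSpos i)
  have hωp : 0 < ∏ j, ω j := Finset.prod_pos fun j _ => hω j
  positivity
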